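/- Let m, d be integers with d odd and gcd(4m+1, d) = 1, set n = −d·(4m+1+16d), and let E be the elliptic curve over ℚ defined by y² + xy = x³ + m·x² + n·x. Then E(ℚ) has exactly three points of order two, namely P = (0,0), Q = (4d, −2d) and S = (−(4m+1+16d)/4, (4m+1+16d)/8), and moreover P + Q = S in the group law of E(ℚ). -/

import Mathlib

/-- The Weierstrass curve `y² + xy = x³ + m·x² + n·x` over `ℚ`, i.e. the Weierstrass curve
with coefficients `(a₁, a₂, a₃, a₄, a₆) = (1, m, 0, n, 0)`. -/
def Wmn (m n : ℤ) : WeierstrassCurve ℚ :=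
  { a₁ := 1, a₂ := (m : ℚ), a₃ := 0, a₄ := (n : ℚ), a₆ := 0 }

open WeierstrassCurve.Affine in
private lemma some_eq_some' {F : Type*} [Field F] {W : WeierstrassCurve.Affine F}
    {x₁ y₁ x₂ y₂ : F} (h₁ : W.Nonsingular x₁ y₁) (h₂ : W.Nonsingular x₂ y₂)
    (hx : x₁ = x₂) (hy : y₁ = y₂) : Point.some _ _ h₁ = Point.some _ _ h₂ := by
  subst hx; subst hy; rfl

open WeierstrassCurve.Affine in
private lemma some_ne_zero' {F : Type*} [Field F] {W : WeierstrassCurve.Affine F}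
    {x y : F} (h : W.Nonsingular x y) : Point.some _ _ h ≠ 0 := by
  rw [WeierstrassCurve.Affine.Point.zero_def]
  exact fun hc => by cases hc

/-- Let `m, d` be integers with `d` odd and `gcd(4m+1, d) = 1`, set `n = −d·(4m+1+16d)`, and
let `E` be the elliptic curve over `ℚ` defined by `y² + xy = x³ + m·x² + n·x`.  Then `E(ℚ)`
has exactly three points of order two, namely `P = (0,0)`, `Q = (4d, −2d)` and
`S = (−(4m+1+16d)/4, (4m+1+16d)/8)`, and moreover `P + Q = S` in the group law of `E(ℚ)`. -/
theorem stmt_1 (m d n : ℤ) (hd : Odd d) (hgcd : Int.gcd (4 * m + 1) d = 1)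
    (hn : n = -d * (4 * m + 1 + 16 * d)) :
    ∃ (hP : (Wmn m n).toAffine.Nonsingular 0 0)
      (hQ : (Wmn m n).toAffine.Nonsingular ((4 * d : ℤ) : ℚ) ((-2 * d : ℤ) : ℚ))
      (hS : (Wmn m n).toAffine.Nonsingular
        (-((4 * m + 1 + 16 * d : ℤ) : ℚ) / 4) (((4 * m + 1 + 16 * d : ℤ) : ℚ) / 8)),
      {T : (Wmn m n).toAffine.Point | addOrderOf T = 2} =
        {WeierstrassCurve.Affine.Point.some _ _ hP, WeierstrassCurve.Affine.Point.some _ _ hQ,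
          WeierstrassCurve.Affine.Point.some _ _ hS} ∧
      WeierstrassCurve.Affine.Point.some _ _ hP + WeierstrassCurve.Affine.Point.some _ _ hQ =
        WeierstrassCurve.Affine.Point.some _ _ hS := by
  obtain ⟨k, hk⟩ := hd
  have hd0 : d ≠ 0 := by omega
  have hA0 : (4 * m + 1 + 16 * d) ≠ 0 := by omega
  have hB0 : (4 * m + 1 + 32 * d) ≠ 0 := by omega
  have hn0 : n ≠ 0 := by
    rw [hn]; exact mul_ne_zero (neg_ne_zero.mpr hd0) hA0
  have hd0' : ((d : ℚ)) ≠ 0 := Int.cast_ne_zero.mpr hd0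
  have hA0' : ((4 * m + 1 + 16 * d : ℤ) : ℚ) ≠ 0 := Int.cast_ne_zero.mpr hA0
  have hΔ : (Wmn m n).toAffine.Δ ≠ 0 := by
    have hΔeq : (Wmn m n).toAffine.Δ = (n : ℚ) ^ 2 * ((4 * m + 1 + 32 * d : ℤ) : ℚ) ^ 2 := by
      simp only [Wmn, WeierstrassCurve.toAffine, WeierstrassCurve.Δ, WeierstrassCurve.b₂,
        WeierstrassCurve.b₄, WeierstrassCurve.b₆, WeierstrassCurve.b₈, hn]
      push_cast
      ring
    rw [hΔeq]
    exact mul_ne_zero (pow_ne_zero _ (Int.cast_ne_zero.mpr hn0))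
      (pow_ne_zero _ (Int.cast_ne_zero.mpr hB0))
  have eP : (Wmn m n).toAffine.Equation 0 0 := by
    rw [WeierstrassCurve.Affine.equation_iff]
    simp [Wmn]
  have eQ : (Wmn m n).toAffine.Equation ((4 * d : ℤ) : ℚ) ((-2 * d : ℤ) : ℚ) := by
    rw [WeierstrassCurve.Affine.equation_iff]
    simp only [Wmn, hn]
    push_cast
    ring
  have eS : (Wmn m n).toAffine.Equation (-((4 * m + 1 + 16 * d : ℤ) : ℚ) / 4)
      (((4 * m + 1 + 16 * d : ℤ) : ℚ) / 8) := by
    rw [WeierstrassCurve.Affine.equation_iff]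
    simp only [Wmn, hn]
    push_cast
    ring
  have hP := ((Wmn m n).toAffine.equation_iff_nonsingular_of_Δ_ne_zero hΔ).mp eP
  have hQ := ((Wmn m n).toAffine.equation_iff_nonsingular_of_Δ_ne_zero hΔ).mp eQ
  have hS := ((Wmn m n).toAffine.equation_iff_nonsingular_of_Δ_ne_zero hΔ).mp eS
  refine ⟨hP, hQ, hS, ?_, ?_⟩
  · -- set equality
    have hnegP : (0 : ℚ) = (Wmn m n).toAffine.negY 0 0 := by
      simp [WeierstrassCurve.Affine.negY, Wmn]
    have hnegQ : ((-2 * d : ℤ) : ℚ) = (Wmn m n).toAffine.negY ((4 * d : ℤ) : ℚ) ((-2 * d : ℤ) : ℚ) := by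
      simp only [WeierstrassCurve.Affine.negY, Wmn]
      push_cast
      ring
    have hnegS : (((4 * m + 1 + 16 * d : ℤ) : ℚ) / 8) =
        (Wmn m n).toAffine.negY (-((4 * m + 1 + 16 * d : ℤ) : ℚ) / 4)
          (((4 * m + 1 + 16 * d : ℤ) : ℚ) / 8) := by
      simp only [WeierstrassCurve.Affine.negY, Wmn]
      ring
    have horder : ∀ {x y : ℚ} (h : (Wmn m n).toAffine.Nonsingular x y),
        y = (Wmn m n).toAffine.negY x y →
        addOrderOf (WeierstrassCurve.Affine.Point.some _ _ h) = 2 := by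
      intro x y h hy
      refine addOrderOf_eq_prime ?_ (some_ne_zero' h)
      rw [two_nsmul]
      exact WeierstrassCurve.Affine.Point.add_self_of_Y_eq hy
    ext T
    simp only [Set.mem_setOf_eq, Set.mem_insert_iff, Set.mem_singleton_iff]
    constructor
    · intro hT
      have hTne : T ≠ 0 := by
        intro h0; rw [h0, addOrderOf_zero] at hT; omega
      have hT2 : T + T = 0 := by
        have := addOrderOf_nsmul_eq_zero T
        rwa [hT, two_nsmul] at this
      rcases T with _ | @⟨x, y, h⟩
      · exact absurd rfl hTne
      have hy : y = (Wmn m n).toAffine.negY x y := by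
        by_contra hy
        rw [WeierstrassCurve.Affine.Point.add_self_of_Y_ne hy] at hT2
        exact some_ne_zero' _ hT2
      have hy2 : y = -x / 2 := by
        simp only [WeierstrassCurve.Affine.negY, Wmn] at hy
        linarith
      have heq := (WeierstrassCurve.Affine.equation_iff _ _).mp h.1
      simp only [Wmn, hn] at heq
      rw [hy2] at heq
      have hfac : x * (x - ((4 * d : ℤ) : ℚ)) * (x + ((4 * m + 1 + 16 * d : ℤ) : ℚ) / 4) = 0 := by
        push_cast at heq ⊢
        linear_combination -heq
      rcases mul_eq_zero.mp hfac with hfac | hx3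
      · rcases mul_eq_zero.mp hfac with hx1 | hx2
        · left
          exact some_eq_some' _ _ hx1 (by rw [hy2, hx1]; norm_num)
        · right; left
          have hx : x = ((4 * d : ℤ) : ℚ) := by linarith [sub_eq_zero.mp hx2]
          exact some_eq_some' _ _ hx (by rw [hy2, hx]; push_cast; ring)
      · right; right
        have hx : x = -((4 * m + 1 + 16 * d : ℤ) : ℚ) / 4 := by linarith
        exact some_eq_some' _ _ hx (by rw [hy2, hx]; push_cast; ring)
    · rintro (rfl | rfl | rfl)
      · exact horder hP hnegP
      · exact horder hQ hnegQ
      · exact horder hS hnegS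
  · -- P + Q = S
    have hx : (0 : ℚ) ≠ ((4 * d : ℤ) : ℚ) := by
      push_cast
      intro hc
      exact hd0' (by linarith)
    rw [WeierstrassCurve.Affine.Point.add_of_X_ne hx]
    have hslope : (Wmn m n).toAffine.slope 0 ((4 * d : ℤ) : ℚ) 0 ((-2 * d : ℤ) : ℚ) = -1 / 2 := by
      rw [WeierstrassCurve.Affine.slope_of_X_ne hx]
      push_cast
      field_simp
      ring
    refine some_eq_some' _ _ ?_ ?_
    · rw [hslope]
      simp only [WeierstrassCurve.Affine.addX, Wmn]
      push_cast
      ring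
    · rw [hslope]
      simp only [WeierstrassCurve.Affine.addY, WeierstrassCurve.Affine.negAddY,
        WeierstrassCurve.Affine.addX, WeierstrassCurve.Affine.negY, Wmn]
      push_cast
      ring
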